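/- Let g be a nonnegative multiplicative function such that ∑_{p ≤ t} g(p) (log p)/p ∼ θ log t as t → ∞ for some θ > 0, and ∑_p (g(p)²/p² + ∑_{i ≥ 2} g(p^i)/p^i) < ∞. Define E(t) = ∑_{p ≤ t} (g(p) - θ)(log p)/p. Then E(t) = o(log t) as t → ∞, and the function L(log x) = C · exp(∫_2^x E(t)/(t log² t) dt) is slowly varying: L(λu)/L(u) → 1 as u → ∞ for every fixed λ > 0. -/

import Mathlib

open Filter

/-- `E(t) = ∑_{p ≤ t} (g(p) - θ) log p / p`. -/
noncomputable def mertensError (g : ℕ → ℝ) (θ : ℝ) (t : ℝ) : ℝ :=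
  ∑ p ∈ Nat.primesBelow (⌊t⌋₊ + 1), (g p - θ) * Real.log p / p

open Finset ArithmeticFunction MeasureTheory


lemma card_dvd_Icc (n d : ℕ) : #((Finset.Icc 1 n).filter (fun m => d ∣ m)) = n / d := by
  rw [← Nat.card_multiples n d]
  apply Finset.card_bij (fun m _ => m - 1)
  · intro a ha
    simp only [Finset.mem_filter, Finset.mem_Icc, Finset.mem_range] at ha ⊢
    obtain ⟨⟨h1, h2⟩, h3⟩ := ha
    refine ⟨by omega, ?_⟩
    rwa [Nat.sub_add_cancel h1]
  · intro a ha b hb hab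
    simp only [Finset.mem_filter, Finset.mem_Icc] at ha hb
    omega
  · intro b hb
    simp only [Finset.mem_filter, Finset.mem_Icc, Finset.mem_range] at hb ⊢
    exact ⟨b + 1, ⟨⟨by omega, by omega⟩, by simpa using hb.2⟩, by omega⟩

lemma sum_vonMangoldt_mul_div (n : ℕ) :
    ∑ d ∈ Finset.Icc 1 n, Λ d * ((n / d : ℕ) : ℝ) = ∑ m ∈ Finset.Icc 1 n, Real.log m := by
  have key : ∀ m ∈ Finset.Icc 1 n, Real.log m = ∑ d ∈ Finset.Icc 1 n, if d ∣ m then Λ d else 0 := by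
    intro m hm
    simp only [Finset.mem_Icc] at hm
    rw [← ArithmeticFunction.vonMangoldt_sum (n := m), ← Finset.sum_filter]
    apply Finset.sum_congr _ (fun _ _ => rfl)
    ext d
    simp only [Nat.mem_divisors, Finset.mem_filter, Finset.mem_Icc]
    constructor
    · rintro ⟨hd, h0⟩
      exact ⟨⟨Nat.pos_of_dvd_of_pos hd (by omega), le_trans (Nat.le_of_dvd (by omega) hd) hm.2⟩, hd⟩
    · rintro ⟨_, hd⟩
      exact ⟨hd, by omega⟩
  rw [Finset.sum_congr rfl key, Finset.sum_comm]
  refine Finset.sum_congr rfl fun d hd => ?_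
  rw [← Finset.sum_filter, Finset.sum_const, nsmul_eq_mul, card_dvd_Icc, mul_comm]

lemma prod_Icc_eq_factorial (n : ℕ) : ∏ m ∈ Finset.Icc 1 n, m = (Nat.factorial n) := by
  rw [← Finset.prod_range_add_one_eq_factorial]
  rw [← Finset.Ico_add_one_right_eq_Icc]
  rw [Finset.prod_Ico_eq_prod_range]
  simp [add_comm]

lemma sum_log_Icc (n : ℕ) : ∑ m ∈ Finset.Icc 1 n, Real.log m = Real.log ((Nat.factorial n)) := by
  rw [← prod_Icc_eq_factorial, Nat.cast_prod, Real.log_prod]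
  intro x hx
  simp only [Finset.mem_Icc] at hx
  exact Nat.cast_ne_zero.mpr (by omega)

lemma log_factorial_le (n : ℕ) :
    ∑ m ∈ Finset.Icc 1 n, Real.log m ≤ n * Real.log n := by
  calc ∑ m ∈ Finset.Icc 1 n, Real.log m ≤ ∑ m ∈ Finset.Icc 1 n, Real.log n := by
        refine Finset.sum_le_sum fun m hm => ?_
        simp only [Finset.mem_Icc] at hm
        exact Real.log_le_log (by exact_mod_cast hm.1) (by exact_mod_cast hm.2)
    _ = n * Real.log n := by rw [Finset.sum_const, Nat.card_Icc]; simp [nsmul_eq_mul]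

lemma le_log_factorial (n : ℕ) :
    (n : ℝ) * Real.log n - n ≤ ∑ m ∈ Finset.Icc 1 n, Real.log m := by
  rcases Nat.eq_zero_or_pos n with rfl | hn
  · simp
  have hn' : (0:ℝ) < n := by exact_mod_cast hn
  rw [sum_log_Icc]
  have h1 : ((n : ℝ)) ^ n / (Nat.factorial n) ≤ Real.exp n := by
    refine le_trans ?_ (Real.sum_le_exp_of_nonneg (Nat.cast_nonneg n) (n + 1))
    refine Finset.single_le_sum (f := fun i => (n:ℝ) ^ i / (Nat.factorial i)) (fun i _ => by positivity) ?_
    simp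
  have hf : (0:ℝ) < (Nat.factorial n) := by exact_mod_cast Nat.factorial_pos n
  have h2 : ((n:ℝ)) ^ n ≤ (Nat.factorial n) * Real.exp n := by
    rw [div_le_iff₀ hf] at h1; linarith [h1]
  have h3 : Real.log ((n:ℝ) ^ n) ≤ Real.log ((Nat.factorial n) * Real.exp n) := by
    apply Real.log_le_log (by positivity) h2
  rw [Real.log_pow, Real.log_mul (ne_of_gt hf) (Real.exp_ne_zero _), Real.log_exp] at h3
  linarith


lemma theta_le (n : ℕ) : ∑ p ∈ Nat.primesBelow (n+1), Real.log p ≤ n * Real.log 4 := by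
  have h0 : ∀ p ∈ Nat.primesBelow (n+1), (0:ℝ) < p := by
    intro p hp
    exact_mod_cast (Nat.prime_of_mem_primesBelow hp).pos
  have h1 : ∑ p ∈ Nat.primesBelow (n+1), Real.log p
      = Real.log (∏ p ∈ Nat.primesBelow (n+1), (p:ℝ)) := by
    rw [Real.log_prod]
    exact fun p hp => ne_of_gt (h0 p hp)
  have h2 : (∏ p ∈ Nat.primesBelow (n+1), (p:ℝ)) = ((primorial n : ℕ) : ℝ) := by
    rw [primorial, Nat.cast_prod]
    rfl
  have h3 : ((primorial n : ℕ) : ℝ) ≤ (4:ℝ) ^ n := by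
    exact_mod_cast primorial_le_4_pow n
  rw [h1, h2]
  calc Real.log (primorial n) ≤ Real.log ((4:ℝ)^n) :=
        Real.log_le_log (by exact_mod_cast primorial_pos n) h3
    _ = n * Real.log 4 := by rw [Real.log_pow]

lemma log_le_two_sqrt {x : ℝ} (hx : 1 ≤ x) : Real.log x ≤ 2 * Real.sqrt x := by
  have h0 : (0:ℝ) < x := by linarith
  have h1 : Real.log x = 2 * Real.log (Real.sqrt x) := by
    rw [Real.log_sqrt h0.le]; ring
  rw [h1]
  have h2 : Real.log (Real.sqrt x) ≤ Real.sqrt x - 1 :=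
    Real.log_le_sub_one_of_pos (Real.sqrt_pos.mpr h0)
  nlinarith [Real.sqrt_nonneg x]

lemma log_le_four_rpow {x : ℝ} (hx : 1 ≤ x) : Real.log x ≤ 4 * x ^ ((1:ℝ)/4) := by
  have h0 : (0:ℝ) < x := by linarith
  have h1 : Real.log x = 4 * Real.log (x ^ ((1:ℝ)/4)) := by
    rw [Real.log_rpow h0]; ring
  rw [h1]
  have h2 : Real.log (x ^ ((1:ℝ)/4)) ≤ x ^ ((1:ℝ)/4) - 1 :=
    Real.log_le_sub_one_of_pos (Real.rpow_pos_of_pos h0 _)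
  have h3 : (0:ℝ) ≤ x ^ ((1:ℝ)/4) := (Real.rpow_pos_of_pos h0 _).le
  nlinarith

lemma sq_log_le {x : ℝ} (hx : 1 ≤ x) : Real.log x ^ 2 ≤ 16 * Real.sqrt x := by
  have h0 : (0:ℝ) < x := by linarith
  have h1 := log_le_four_rpow hx
  have h2 : (x ^ ((1:ℝ)/4)) ^ 2 = Real.sqrt x := by
    rw [← Real.rpow_natCast (x ^ ((1:ℝ)/4)) 2, ← Real.rpow_mul h0.le, Real.sqrt_eq_rpow]
    norm_num
  have h4 : (0:ℝ) ≤ Real.log x := Real.log_nonneg hx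
  nlinarith [Real.rpow_pos_of_pos h0 ((1:ℝ)/4)]


lemma pp_reconstruct {d : ℕ} (hd : IsPrimePow d) :
    d.minFac ^ (d.factorization d.minFac) = d := by
  obtain ⟨p, k, hp, hk, rfl⟩ := hd
  rw [← Nat.prime_iff] at hp
  rw [hp.pow_minFac hk.ne', hp.factorization_pow, Finsupp.single_eq_same]

lemma pp_not_prime_two_le_factorization {d : ℕ} (hd : IsPrimePow d) (hnp : ¬ d.Prime) :
    2 ≤ d.factorization d.minFac := by
  obtain ⟨p, k, hp, hk, rfl⟩ := hd
  rw [← Nat.prime_iff] at hp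
  rw [hp.pow_minFac hk.ne', hp.factorization_pow, Finsupp.single_eq_same]
  rcases Nat.lt_or_ge k 2 with h | h
  · have : k = 1 := by omega
    subst this
    simp only [pow_one] at hnp
    exact absurd hp hnp
  · exact h

lemma sum_nonprime_le {n : ℕ} (f : ℕ → ℝ) (G : ℕ × ℕ → ℝ) (T : Finset (ℕ × ℕ))
    (hfG : ∀ d, IsPrimePow d → ¬ d.Prime → f d = G (d.minFac, d.factorization d.minFac))
    (hf0 : ∀ d, ¬ IsPrimePow d → f d = 0)
    (hT : ∀ d ∈ Finset.Icc 1 n, IsPrimePow d → ¬ d.Prime →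
      (d.minFac, d.factorization d.minFac) ∈ T)
    (hG0 : ∀ x ∈ T, 0 ≤ G x) :
    ∑ d ∈ (Finset.Icc 1 n).filter (fun d => ¬ d.Prime), f d ≤ ∑ x ∈ T, G x := by
  set S := (Finset.Icc 1 n).filter (fun d => ¬ d.Prime) with hS
  have h1 : ∑ d ∈ S, f d = ∑ d ∈ S.filter IsPrimePow, f d := by
    refine (Finset.sum_filter_of_ne ?_).symm
    intro d _ hfd
    by_contra h
    exact hfd (hf0 d h)
  set e : ℕ → ℕ × ℕ := fun d => (d.minFac, d.factorization d.minFac) with he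
  have hinj : Set.InjOn e (S.filter IsPrimePow) := by
    intro a ha b hb hab
    simp only [Finset.coe_filter, Set.mem_setOf_eq] at ha hb
    have ha' := pp_reconstruct ha.2
    have hb' := pp_reconstruct hb.2
    rw [← ha', ← hb']
    simp only [he, Prod.mk.injEq] at hab
    rw [hab.2, hab.1]
  have h2 : ∑ d ∈ S.filter IsPrimePow, f d = ∑ x ∈ (S.filter IsPrimePow).image e, G x := by
    rw [Finset.sum_image (fun a ha b hb => hinj ha hb)]
    refine Finset.sum_congr rfl fun d hd => ?_
    simp only [hS, Finset.mem_filter, Finset.mem_Icc] at hd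
    exact hfG d hd.2 hd.1.2
  rw [h1, h2]
  apply Finset.sum_le_sum_of_subset_of_nonneg
  · intro x hx
    simp only [Finset.mem_image] at hx
    obtain ⟨d, hd, rfl⟩ := hx
    simp only [hS, Finset.mem_filter, Finset.mem_Icc] at hd
    exact hT d (Finset.mem_Icc.mpr hd.1.1) hd.2 hd.1.2
  · intro x hx _
    exact hG0 x hx

lemma pair_mem_of_pp {n d : ℕ} (hd1 : 1 ≤ d) (hdn : d ≤ n) (hpp : IsPrimePow d)
    (hnp : ¬ d.Prime) :
    2 ≤ d.minFac ∧ d.minFac ^ 2 ≤ n ∧ 2 ≤ d.factorization d.minFac ∧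
      2 ^ (d.factorization d.minFac) ≤ n := by
  have hd2 : 2 ≤ d := hpp.two_le
  have hpm : (d.minFac).Prime := Nat.minFac_prime (by omega)
  have hk2 := pp_not_prime_two_le_factorization hpp hnp
  have hrec := pp_reconstruct hpp
  refine ⟨hpm.two_le, ?_, hk2, ?_⟩
  · calc d.minFac ^ 2 ≤ d.minFac ^ (d.factorization d.minFac) :=
          Nat.pow_le_pow_right hpm.pos hk2
      _ = d := hrec
      _ ≤ n := hdn
  · calc 2 ^ (d.factorization d.minFac) ≤ d.minFac ^ (d.factorization d.minFac) :=
          Nat.pow_le_pow_left hpm.two_le _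
      _ = d := hrec
      _ ≤ n := hdn


lemma filter_prime_Icc (n : ℕ) :
    (Finset.Icc 1 n).filter (fun p => p.Prime) = Nat.primesBelow (n+1) := by
  ext p
  simp only [Finset.mem_filter, Finset.mem_Icc, Nat.mem_primesBelow, Nat.lt_succ_iff]
  exact ⟨fun h => ⟨h.1.2, h.2⟩, fun h => ⟨⟨h.2.one_lt.le, h.1⟩, h.2⟩⟩

lemma psi_le (n : ℕ) :
    ∑ d ∈ Finset.Icc 1 n, Λ d ≤ (Real.log 4 + 16 / Real.log 2) * n := by
  rcases Nat.eq_zero_or_pos n with rfl | hn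
  · simp
  have hn1 : (1:ℝ) ≤ n := by exact_mod_cast hn
  have hl0 : 0 ≤ Real.log n := Real.log_nonneg hn1
  have hb : (0:ℝ) < Real.log 2 := Real.log_pos (by norm_num)
  rw [← Finset.sum_filter_add_sum_filter_not (Finset.Icc 1 n) (fun d => d.Prime)]
  have hprime : ∑ d ∈ (Finset.Icc 1 n).filter (fun d => d.Prime), Λ d ≤ n * Real.log 4 := by
    rw [filter_prime_Icc]
    refine le_trans (le_of_eq (Finset.sum_congr rfl fun p hp =>
      vonMangoldt_apply_prime (Nat.prime_of_mem_primesBelow hp))) (theta_le n)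
  set T : Finset (ℕ × ℕ) := (Finset.Icc 2 n.sqrt) ×ˢ (Finset.Icc 2 (Nat.log 2 n)) with hT
  have hnonprime : ∑ d ∈ (Finset.Icc 1 n).filter (fun d => ¬ d.Prime), Λ d
      ≤ ∑ x ∈ T, Real.log x.1 := by
    refine sum_nonprime_le _ _ _ ?_ ?_ ?_ ?_
    · intro d hpp _
      rw [vonMangoldt_apply, if_pos hpp]
    · intro d h
      rw [vonMangoldt_apply, if_neg h]
    · intro d hd hpp hnp
      rw [Finset.mem_Icc] at hd
      obtain ⟨h1, h2, h3, h4⟩ := pair_mem_of_pp hd.1 hd.2 hpp hnp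
      simp only [hT, Finset.mem_product, Finset.mem_Icc]
      exact ⟨⟨h1, Nat.le_sqrt'.mpr (by simpa [pow_two] using h2)⟩,
        ⟨h3, (Nat.le_log_iff_pow_le (by norm_num) (by omega)).mpr h4⟩⟩
    · intro x hx
      simp only [hT, Finset.mem_product, Finset.mem_Icc] at hx
      exact Real.log_nonneg (by exact_mod_cast le_trans (by norm_num) hx.1.1)
  have hTsum : ∑ x ∈ T, Real.log x.1 ≤ (#T : ℝ) * Real.log n := by
    rw [← nsmul_eq_mul]
    refine Finset.sum_le_card_nsmul _ _ _ fun x hx => ?_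
    simp only [hT, Finset.mem_product, Finset.mem_Icc] at hx
    have hx1 : (1:ℝ) ≤ x.1 := by exact_mod_cast le_trans (by norm_num) hx.1.1
    refine Real.log_le_log (by linarith) ?_
    exact_mod_cast le_trans hx.1.2 (Nat.sqrt_le_self n)
  have hcard : (#T : ℝ) ≤ (n.sqrt : ℝ) * (Nat.log 2 n : ℝ) := by
    have : #T ≤ n.sqrt * Nat.log 2 n := by
      rw [hT, Finset.card_product, Nat.card_Icc, Nat.card_Icc]
      exact Nat.mul_le_mul (by omega) (by omega)
    exact_mod_cast this
  have hsq : (n.sqrt : ℝ) ≤ Real.sqrt n := by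
    rw [Real.le_sqrt (by positivity) (by positivity)]
    exact_mod_cast Nat.sqrt_le' n
  have hlog2 : (Nat.log 2 n : ℝ) * Real.log 2 ≤ Real.log n := by
    have h := Nat.pow_log_le_self 2 (by omega : n ≠ 0)
    calc (Nat.log 2 n : ℝ) * Real.log 2 = Real.log ((2:ℝ) ^ Nat.log 2 n) := by
          rw [Real.log_pow]
      _ ≤ Real.log n := Real.log_le_log (by positivity) (by exact_mod_cast h)
  have hK0 : (0:ℝ) ≤ (Nat.log 2 n : ℝ) := Nat.cast_nonneg _
  have hs0 : (0:ℝ) ≤ Real.sqrt n := Real.sqrt_nonneg _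
  have hss : Real.sqrt n * Real.sqrt n = n := Real.mul_self_sqrt (by positivity)
  have hsqle := sq_log_le hn1
  have hmain : (#T : ℝ) * Real.log n ≤ 16 / Real.log 2 * n := by
    rw [div_mul_eq_mul_div, le_div_iff₀ hb]
    have h1 : (#T : ℝ) * Real.log n * Real.log 2
        ≤ ((n.sqrt : ℝ) * (Nat.log 2 n : ℝ)) * Real.log n * Real.log 2 := by
      have := mul_le_mul_of_nonneg_right hcard hl0
      exact mul_le_mul_of_nonneg_right this hb.le
    have h2 : ((n.sqrt : ℝ) * (Nat.log 2 n : ℝ)) * Real.log n * Real.log 2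
        ≤ (Real.sqrt n * (Nat.log 2 n : ℝ)) * Real.log n * Real.log 2 := by
      have := mul_le_mul_of_nonneg_right (mul_le_mul_of_nonneg_right hsq hK0) hl0
      exact mul_le_mul_of_nonneg_right this hb.le
    have h3 : (Real.sqrt n * (Nat.log 2 n : ℝ)) * Real.log n * Real.log 2
        = Real.sqrt n * Real.log n * ((Nat.log 2 n : ℝ) * Real.log 2) := by ring
    have h4 : Real.sqrt n * Real.log n * ((Nat.log 2 n : ℝ) * Real.log 2)
        ≤ Real.sqrt n * Real.log n * Real.log n :=
      mul_le_mul_of_nonneg_left hlog2 (by positivity)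
    have h5 : Real.sqrt n * Real.log n * Real.log n = Real.log n ^ 2 * Real.sqrt n := by ring
    have h6 : Real.log n ^ 2 * Real.sqrt n ≤ 16 * Real.sqrt n * Real.sqrt n :=
      by nlinarith
    have h7 : 16 * Real.sqrt n * Real.sqrt n = 16 * n := by rw [mul_assoc, hss]
    linarith
  have hNP := le_trans hnonprime hTsum
  linarith


lemma geom_tail {x : ℝ} (hx : 2 ≤ x) (K : ℕ) :
    ∑ k ∈ Finset.Icc 2 K, (1/x)^k ≤ 2 / x^2 := by
  have hx0 : (0:ℝ) < x := by linarith
  have step : ∀ k ∈ Finset.Icc 2 K, (1/x)^k ≤ (1/x)^2 * (1/2)^(k-2) := by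
    intro k hk
    simp only [Finset.mem_Icc] at hk
    have : (1/x)^k = (1/x)^2 * (1/x)^(k-2) := by
      rw [← pow_add]; congr 1; omega
    rw [this]
    refine mul_le_mul_of_nonneg_left (pow_le_pow_left₀ (by positivity) ?_ _) (by positivity)
    rw [div_le_div_iff₀ hx0 (by norm_num : (0:ℝ) < 2)]
    linarith
  calc ∑ k ∈ Finset.Icc 2 K, (1/x)^k ≤ ∑ k ∈ Finset.Icc 2 K, (1/x)^2 * (1/2)^(k-2) :=
        Finset.sum_le_sum step
    _ = (1/x)^2 * ∑ k ∈ Finset.Icc 2 K, ((1:ℝ)/2)^(k-2) := by rw [Finset.mul_sum]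
    _ ≤ (1/x)^2 * 2 := by
        refine mul_le_mul_of_nonneg_left ?_ (by positivity)
        rw [← Finset.Ico_add_one_right_eq_Icc, Finset.sum_Ico_eq_sum_range]
        refine le_trans (le_of_eq (Finset.sum_congr rfl fun j _ => by
          congr 1; omega)) (sum_geometric_two_le _)
    _ = 2 / x^2 := by ring

lemma rpow_neg_three_half (p : ℕ) (hp : 1 ≤ p) :
    ((p:ℝ))^(-(3/2) : ℝ) = Real.sqrt p / (p:ℝ)^2 := by
  have hp0 : (0:ℝ) < p := by exact_mod_cast hp
  rw [Real.sqrt_eq_rpow, ← Real.rpow_natCast (p:ℝ) 2, ← Real.rpow_sub hp0]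
  norm_num

lemma sum_rpow_tail_le (n : ℕ) :
    ∑ p ∈ Finset.Icc 2 n, 4 * ((p:ℝ))^(-(3/2) : ℝ)
      ≤ 4 * ∑' m : ℕ, ((m:ℝ))^(-(3/2) : ℝ) := by
  have hsum : Summable (fun m : ℕ => ((m:ℝ))^(-(3/2) : ℝ)) :=
    Real.summable_nat_rpow.mpr (by norm_num)
  rw [← Finset.mul_sum]
  refine mul_le_mul_of_nonneg_left ?_ (by norm_num)
  exact Summable.sum_le_tsum _ (fun m _ => Real.rpow_nonneg (Nat.cast_nonneg m) _) hsum


noncomputable def c₂ : ℝ := 4 * ∑' m : ℕ, ((m:ℝ))^(-(3/2) : ℝ)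

lemma nonprime_div_le (n : ℕ) :
    ∑ d ∈ (Finset.Icc 1 n).filter (fun d => ¬ d.Prime), Λ d / d ≤ c₂ := by
  set T : Finset (ℕ × ℕ) := (Finset.Icc 2 n) ×ˢ (Finset.Icc 2 (Nat.log 2 n)) with hT
  have key : ∑ d ∈ (Finset.Icc 1 n).filter (fun d => ¬ d.Prime), Λ d / d
      ≤ ∑ x ∈ T, Real.log x.1 / (x.1 : ℝ)^x.2 := by
    refine sum_nonprime_le _ _ _ ?_ ?_ ?_ ?_
    · intro d hpp hnp
      have hrec := pp_reconstruct hpp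
      have hcast : (d:ℝ) = (d.minFac:ℝ) ^ (d.factorization d.minFac) := by
        conv_lhs => rw [← hrec]
        push_cast
        rfl
      rw [vonMangoldt_apply, if_pos hpp, hcast]
    · intro d h
      rw [vonMangoldt_apply, if_neg h]
      simp
    · intro d hd hpp hnp
      rw [Finset.mem_Icc] at hd
      obtain ⟨h1, h2, h3, h4⟩ := pair_mem_of_pp hd.1 hd.2 hpp hnp
      simp only [hT, Finset.mem_product, Finset.mem_Icc]
      have hple : d.minFac ≤ n := le_trans (Nat.le_of_dvd (by omega) (Nat.minFac_dvd d)) hd.2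
      exact ⟨⟨h1, hple⟩, ⟨h3, (Nat.le_log_iff_pow_le (by norm_num) (by omega)).mpr h4⟩⟩
    · intro x hx
      simp only [hT, Finset.mem_product, Finset.mem_Icc] at hx
      have : (1:ℝ) ≤ x.1 := by exact_mod_cast le_trans (by norm_num) hx.1.1
      have h0 : (0:ℝ) < (x.1 : ℝ)^x.2 := by positivity
      positivity
  refine le_trans key ?_
  rw [Finset.sum_product]
  have inner : ∀ p ∈ Finset.Icc 2 n,
      ∑ k ∈ Finset.Icc 2 (Nat.log 2 n), Real.log p / (p:ℝ)^k ≤ 4 * ((p:ℝ))^(-(3/2) : ℝ) := by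
    intro p hp
    simp only [Finset.mem_Icc] at hp
    have hp2 : (2:ℝ) ≤ p := by exact_mod_cast hp.1
    have hp1 : (1:ℝ) ≤ p := by linarith
    have hp0 : (0:ℝ) < p := by linarith
    have hlp : 0 ≤ Real.log p := Real.log_nonneg hp1
    have h1 : ∑ k ∈ Finset.Icc 2 (Nat.log 2 n), Real.log p / (p:ℝ)^k
        = Real.log p * ∑ k ∈ Finset.Icc 2 (Nat.log 2 n), (1/(p:ℝ))^k := by
      rw [Finset.mul_sum]
      refine Finset.sum_congr rfl fun k _ => ?_
      rw [div_pow, one_pow, mul_one_div]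
    rw [h1]
    calc Real.log p * ∑ k ∈ Finset.Icc 2 (Nat.log 2 n), (1/(p:ℝ))^k
        ≤ Real.log p * (2 / (p:ℝ)^2) :=
          mul_le_mul_of_nonneg_left (geom_tail hp2 _) hlp
      _ ≤ (2 * Real.sqrt p) * (2 / (p:ℝ)^2) :=
          mul_le_mul_of_nonneg_right (log_le_two_sqrt hp1) (by positivity)
      _ = 4 * (Real.sqrt p / (p:ℝ)^2) := by ring
      _ = 4 * ((p:ℝ))^(-(3/2) : ℝ) := by rw [rpow_neg_three_half p (by omega)]
  refine le_trans (Finset.sum_le_sum inner) ?_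
  exact le_trans (sum_rpow_tail_le n) (le_of_eq rfl)

lemma c₂_nonneg : 0 ≤ c₂ := by
  refine mul_nonneg (by norm_num) (tsum_nonneg fun m => Real.rpow_nonneg (Nat.cast_nonneg m) _)


noncomputable def mertK : ℝ := (Real.log 4 + 16 / Real.log 2) + 1 + c₂

lemma mertK_nonneg : 0 ≤ mertK := by
  have h4 : 0 ≤ Real.log 4 := Real.log_nonneg (by norm_num)
  have h2 : 0 < Real.log 2 := Real.log_pos (by norm_num)
  have := c₂_nonneg
  unfold mertK
  positivity

lemma mertens_nat (n : ℕ) (hn : 1 ≤ n) :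
    |(∑ p ∈ Nat.primesBelow (n + 1), Real.log p / p) - Real.log n| ≤ mertK := by
  have hnpos : (0:ℝ) < n := by exact_mod_cast hn
  obtain ⟨c, hc⟩ : ∃ c : ℝ, Real.log 4 + 16 / Real.log 2 = c := ⟨_, rfl⟩
  obtain ⟨A, hA⟩ : ∃ A : ℝ, ∑ d ∈ Finset.Icc 1 n, Λ d / d = A := ⟨_, rfl⟩
  have hmul : (n:ℝ) * A = ∑ d ∈ Finset.Icc 1 n, Λ d * ((n:ℝ)/d) := by
    rw [← hA, Finset.mul_sum]
    exact Finset.sum_congr rfl fun d _ => by ring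
  have hlow : (n:ℝ) * Real.log n - n ≤ (n:ℝ) * A := by
    refine le_trans (le_log_factorial n) (le_trans (le_of_eq (sum_vonMangoldt_mul_div n).symm) ?_)
    rw [hmul]
    refine Finset.sum_le_sum fun d _ => ?_
    exact mul_le_mul_of_nonneg_left Nat.cast_div_le vonMangoldt_nonneg
  have hdiv : ∀ d ∈ Finset.Icc 1 n, (n:ℝ)/d ≤ ((n/d : ℕ):ℝ) + 1 := by
    intro d hd
    simp only [Finset.mem_Icc] at hd
    have hd0 : (0:ℝ) < d := by exact_mod_cast hd.1
    have h1 : ((n:ℝ)) = d * ((n/d : ℕ):ℝ) + ((n % d : ℕ):ℝ) := by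
      exact_mod_cast (Nat.div_add_mod n d).symm
    have h2 : ((n % d : ℕ):ℝ) < d := by
      exact_mod_cast Nat.mod_lt n (by omega)
    rw [div_le_iff₀ hd0]
    linarith
  have hup : (n:ℝ) * A ≤ (n:ℝ) * Real.log n + c * n := by
    rw [hmul]
    calc ∑ d ∈ Finset.Icc 1 n, Λ d * ((n:ℝ)/d)
        ≤ ∑ d ∈ Finset.Icc 1 n, Λ d * (((n/d : ℕ):ℝ) + 1) := by
          refine Finset.sum_le_sum fun d hd => ?_
          exact mul_le_mul_of_nonneg_left (hdiv d hd) vonMangoldt_nonneg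
      _ = ∑ d ∈ Finset.Icc 1 n, Λ d * ((n/d : ℕ):ℝ) + ∑ d ∈ Finset.Icc 1 n, Λ d := by
          rw [← Finset.sum_add_distrib]
          exact Finset.sum_congr rfl fun d _ => by ring
      _ ≤ (n:ℝ) * Real.log n + c * n := by
          have h5 := psi_le n
          have h6 := le_trans (le_of_eq (sum_vonMangoldt_mul_div n)) (log_factorial_le n)
          rw [← hc]
          linarith
  have hA_low : Real.log n - 1 ≤ A := by
    have h1 : (n:ℝ) * (Real.log n - 1) ≤ (n:ℝ) * A := by nlinarith
    exact le_of_mul_le_mul_left h1 hnpos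
  have hA_up : A ≤ Real.log n + c := by
    have h1 : (n:ℝ) * A ≤ (n:ℝ) * (Real.log n + c) := by nlinarith
    exact le_of_mul_le_mul_left h1 hnpos
  have hsplit : ∑ d ∈ (Finset.Icc 1 n).filter (fun d => d.Prime), Λ d / d
      + ∑ d ∈ (Finset.Icc 1 n).filter (fun d => ¬ d.Prime), Λ d / d = A := by
    rw [← hA]
    exact Finset.sum_filter_add_sum_filter_not _ _ _
  have hMeq : ∑ d ∈ (Finset.Icc 1 n).filter (fun d => d.Prime), Λ d / d
      = ∑ p ∈ Nat.primesBelow (n + 1), Real.log p / p := by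
    rw [filter_prime_Icc]
    exact Finset.sum_congr rfl fun p hp => by
      rw [vonMangoldt_apply_prime (Nat.prime_of_mem_primesBelow hp)]
  have hNP0 : 0 ≤ ∑ d ∈ (Finset.Icc 1 n).filter (fun d => ¬ d.Prime), Λ d / d :=
    Finset.sum_nonneg fun d _ => div_nonneg vonMangoldt_nonneg (Nat.cast_nonneg d)
  have hNPc := nonprime_div_le n
  have hc0 : 0 ≤ c := by
    have h4 : 0 ≤ Real.log 4 := Real.log_nonneg (by norm_num)
    have h2 : 0 < Real.log 2 := Real.log_pos (by norm_num)
    rw [← hc]; positivity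
  have hc₂0 := c₂_nonneg
  rw [abs_le, ← hMeq]
  have hmk : mertK = c + 1 + c₂ := by rw [← hc]; rfl
  rw [hmk]
  have hP : ∑ d ∈ (Finset.Icc 1 n).filter (fun d => d.Prime), Λ d / d
      = A - ∑ d ∈ (Finset.Icc 1 n).filter (fun d => ¬ d.Prime), Λ d / d := by
    linarith [hsplit]
  rw [hP]
  constructor
  · linarith [hA_low, hNPc, hc0]
  · linarith [hA_up, hNP0, hc₂0]


lemma mertens_real : Tendsto (fun t : ℝ =>
    (∑ p ∈ Nat.primesBelow (⌊t⌋₊ + 1), Real.log p / p) / Real.log t) atTop (nhds 1) := by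
  rw [← tendsto_sub_nhds_zero_iff]
  have key : ∀ t : ℝ, 2 ≤ t →
      |(∑ p ∈ Nat.primesBelow (⌊t⌋₊ + 1), Real.log p / p) / Real.log t - 1|
        ≤ (mertK + Real.log 2) / Real.log t := by
    intro t ht
    have ht0 : (0:ℝ) < t := by linarith
    have hlt : 0 < Real.log t := Real.log_pos (by linarith)
    have hn1 : 1 ≤ ⌊t⌋₊ := by
      have : (2:ℕ) ≤ ⌊t⌋₊ := Nat.le_floor (by exact_mod_cast ht)
      omega
    have hn0 : (0:ℝ) < (⌊t⌋₊ : ℝ) := by exact_mod_cast hn1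
    have hfl : ((⌊t⌋₊ : ℕ):ℝ) ≤ t := Nat.floor_le ht0.le
    have hlog1 : Real.log (⌊t⌋₊ : ℝ) ≤ Real.log t := Real.log_le_log hn0 hfl
    have hlog2 : Real.log t ≤ Real.log 2 + Real.log (⌊t⌋₊ : ℝ) := by
      rw [← Real.log_mul (by norm_num) (ne_of_gt hn0)]
      refine Real.log_le_log ht0 ?_
      have hfl2 : t < (⌊t⌋₊ : ℝ) + 1 := Nat.lt_floor_add_one t
      have h1 : (1:ℝ) ≤ (⌊t⌋₊ : ℝ) := by exact_mod_cast hn1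
      linarith
    have hM := mertens_nat ⌊t⌋₊ hn1
    have heq : (∑ p ∈ Nat.primesBelow (⌊t⌋₊ + 1), Real.log p / p) / Real.log t - 1
        = ((∑ p ∈ Nat.primesBelow (⌊t⌋₊ + 1), Real.log p / p) - Real.log t) / Real.log t := by
      field_simp
    rw [heq, abs_div, abs_of_pos hlt]
    gcongr
    rw [abs_le] at hM ⊢
    constructor
    · linarith [hM.1]
    · linarith [hM.2]
  have hg : Tendsto (fun t : ℝ => (mertK + Real.log 2) / Real.log t) atTop (nhds 0) :=
    tendsto_const_nhds.div_atTop Real.tendsto_log_atTop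
  refine squeeze_zero_norm' ?_ hg
  filter_upwards [eventually_ge_atTop (2:ℝ)] with t ht
  exact key t ht


lemma measurable_mertensError (g : ℕ → ℝ) (θ : ℝ) : Measurable (mertensError g θ) := by
  have : mertensError g θ =
      (fun n : ℕ => ∑ p ∈ Nat.primesBelow (n + 1), (g p - θ) * Real.log p / p) ∘
        (Nat.floor : ℝ → ℕ) := rfl
  rw [this]
  exact measurable_from_nat.comp Nat.measurable_floor

lemma mertensError_bound (g : ℕ → ℝ) (θ : ℝ) {t b : ℝ} (htb : t ≤ b) :
    |mertensError g θ t| ≤ ∑ p ∈ Nat.primesBelow (⌊b⌋₊ + 1), |(g p - θ) * Real.log p / p| := by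
  refine le_trans (Finset.abs_sum_le_sum_abs _ _) ?_
  refine Finset.sum_le_sum_of_subset_of_nonneg ?_ (fun _ _ _ => abs_nonneg _)
  intro p hp
  rw [Nat.mem_primesBelow] at hp ⊢
  have := Nat.floor_le_floor htb
  exact ⟨by omega, hp.2⟩

lemma mertensError_integrable (g : ℕ → ℝ) (θ : ℝ) {a b : ℝ} (ha : 2 ≤ a) (hab : a ≤ b) :
    IntervalIntegrable (fun t => mertensError g θ t / (t * Real.log t ^ 2))
      MeasureTheory.volume a b := by
  have hmeas : Measurable (fun t => mertensError g θ t / (t * Real.log t ^ 2)) :=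
    (measurable_mertensError g θ).div (measurable_id.mul (Real.measurable_log.pow_const 2))
  rw [intervalIntegrable_iff_integrableOn_Ioc_of_le hab]
  set B : ℝ := ∑ p ∈ Nat.primesBelow (⌊b⌋₊ + 1), |(g p - θ) * Real.log p / p| with hB
  refine MeasureTheory.Measure.integrableOn_of_bounded (M := B / (2 * Real.log 2 ^ 2))
    measure_Ioc_lt_top.ne hmeas.aestronglyMeasurable ?_
  filter_upwards [MeasureTheory.ae_restrict_mem measurableSet_Ioc] with t ht
  have ht2 : 2 ≤ t := le_trans ha ht.1.le
  have htb : t ≤ b := ht.2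
  have hl2 : 0 < Real.log 2 := Real.log_pos (by norm_num)
  have hlt : Real.log 2 ≤ Real.log t := Real.log_le_log (by norm_num) ht2
  have hden : 2 * Real.log 2 ^ 2 ≤ t * Real.log t ^ 2 := by nlinarith
  have hden0 : 0 < 2 * Real.log 2 ^ 2 := by positivity
  have hB0 : |mertensError g θ t| ≤ B := mertensError_bound g θ htb
  rw [Real.norm_eq_abs, abs_div, abs_of_pos (lt_of_lt_of_le hden0 hden)]
  exact div_le_div₀ (le_trans (abs_nonneg _) hB0) hB0 hden0 hden

lemma abs_integral_le (F : ℝ → ℝ) (a b c : ℝ) (h2 : 2 ≤ a) (hab : a ≤ b) (hc : 0 ≤ c)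
    (hint : IntervalIntegrable F MeasureTheory.volume a b)
    (hbd : ∀ t ∈ Set.Icc a b, |F t| ≤ c / t) :
    |∫ t in a..b, F t| ≤ c * (Real.log b - Real.log a) := by
  have h0a : (0:ℝ) < a := lt_of_lt_of_le two_pos h2
  have h0b : (0:ℝ) < b := lt_of_lt_of_le h0a hab
  calc |∫ t in a..b, F t| ≤ ∫ t in a..b, |F t| :=
        intervalIntegral.abs_integral_le_integral_abs hab
    _ ≤ ∫ t in a..b, c / t := by
        refine intervalIntegral.integral_mono_on hab hint.abs ?_ hbd
        refine ContinuousOn.intervalIntegrable ?_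
        refine continuousOn_const.div continuousOn_id fun x hx => ?_
        rw [Set.uIcc_of_le hab] at hx
        exact ne_of_gt (lt_of_lt_of_le h0a hx.1)
    _ = c * (Real.log b - Real.log a) := by
        simp_rw [div_eq_mul_one_div c]
        rw [intervalIntegral.integral_const_mul, integral_one_div ?h]
        · rw [Real.log_div (ne_of_gt h0b) (ne_of_gt h0a)]
        · intro h
          rw [Set.uIcc_of_le hab] at h
          exact absurd h.1 (by linarith)


lemma key_bound (g : ℕ → ℝ) (θ : ℝ) {ε' T x y : ℝ} (hε' : 0 < ε')
    (hT : ∀ t : ℝ, max T 2 ≤ t → |mertensError g θ t / Real.log t| ≤ ε')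
    (hx : max T 2 ≤ Real.exp x) (hxy : x ≤ y) (hx0 : 0 < x) :
    |∫ t in Real.exp x..Real.exp y,
        mertensError g θ t / (t * Real.log t ^ 2)| ≤ ε' / x * (y - x) := by
  have h2x : (2:ℝ) ≤ Real.exp x := le_trans (le_max_right _ _) hx
  have hab : Real.exp x ≤ Real.exp y := Real.exp_le_exp.mpr hxy
  have hbd : ∀ t ∈ Set.Icc (Real.exp x) (Real.exp y),
      |mertensError g θ t / (t * Real.log t ^ 2)| ≤ (ε' / x) / t := by
    intro t ht
    have ht2 : (2:ℝ) ≤ t := le_trans h2x ht.1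
    have ht0 : (0:ℝ) < t := by linarith
    have hlog : x ≤ Real.log t := by
      rw [← Real.log_exp x]
      exact Real.log_le_log (Real.exp_pos x) ht.1
    have hlog0 : 0 < Real.log t := lt_of_lt_of_le hx0 hlog
    have hE : |mertensError g θ t| ≤ ε' * Real.log t := by
      have h := hT t (le_trans hx ht.1)
      rw [abs_div, abs_of_pos hlog0, div_le_iff₀ hlog0] at h
      linarith
    rw [abs_div, abs_of_pos (by positivity : (0:ℝ) < t * Real.log t ^ 2)]
    calc |mertensError g θ t| / (t * Real.log t ^ 2)
        ≤ (ε' * Real.log t) / (t * Real.log t ^ 2) := by gcongr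
      _ = ε' / (t * Real.log t) := by
          rw [pow_two]
          field_simp
      _ ≤ ε' / (t * x) := by
          have hx' : t * x ≤ t * Real.log t := by nlinarith
          exact div_le_div_of_nonneg_left hε'.le (by positivity) hx'
      _ = (ε' / x) / t := by
          rw [div_div, mul_comm t x]
  have := abs_integral_le _ (Real.exp x) (Real.exp y) (ε' / x) h2x hab (by positivity)
    (mertensError_integrable g θ h2x hab) hbd
  rwa [Real.log_exp, Real.log_exp] at this


/-- **Slow variation of the Wirsing correction factor.** Let `g` be a nonnegative
multiplicative function with `∑_{p ≤ t} g(p) log p / p ∼ θ log t` for some `θ > 0` and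
`∑_p (g(p)²/p² + ∑_{i ≥ 2} g(p^i)/p^i) < ∞`. Then `E(t) = ∑_{p≤t}(g(p)-θ) log p/p`
satisfies `E(t) = o(log t)`, and `L(log x) = C exp(∫_2^x E(t)/(t log² t) dt)` is slowly
varying: `L(λ u)/L(u) → 1` as `u → ∞` for every `λ > 0`. -/
theorem mertens_error_slowly_varying
    (g : ℕ → ℝ) (θ : ℝ) (hθ : 0 < θ)
    (hg0 : ∀ n, 0 ≤ g n) (hg1 : g 1 = 1)
    (hgmult : ∀ m n : ℕ, Nat.Coprime m n → g (m * n) = g m * g n)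
    (hlog : Tendsto (fun t : ℝ =>
        (∑ p ∈ Nat.primesBelow (⌊t⌋₊ + 1), g p * Real.log p / p) / Real.log t)
      atTop (nhds θ))
    (hser : Summable fun p : {p : ℕ // p.Prime} =>
      g p ^ 2 / ((p : ℕ) : ℝ) ^ 2 +
        ∑' i : ℕ, g ((p : ℕ) ^ (i + 2)) / ((p : ℕ) : ℝ) ^ (i + 2)) :
    Tendsto (fun t : ℝ => mertensError g θ t / Real.log t) atTop (nhds 0) ∧
    ∀ C : ℝ, 0 < C → ∀ lam : ℝ, 0 < lam →
      Tendsto (fun u : ℝ =>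
          (C * Real.exp (∫ t in (2:ℝ)..(Real.exp (lam * u)),
              mertensError g θ t / (t * (Real.log t) ^ 2))) /
          (C * Real.exp (∫ t in (2:ℝ)..(Real.exp u),
              mertensError g θ t / (t * (Real.log t) ^ 2))))
        atTop (nhds 1) := by
  have hEq : ∀ t : ℝ, mertensError g θ t
      = (∑ p ∈ Nat.primesBelow (⌊t⌋₊ + 1), g p * Real.log p / p)
        - θ * ∑ p ∈ Nat.primesBelow (⌊t⌋₊ + 1), Real.log p / p := by
    intro t
    rw [mertensError, Finset.mul_sum, ← Finset.sum_sub_distrib]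
    exact Finset.sum_congr rfl fun p _ => by ring
  have hE : Tendsto (fun t : ℝ => mertensError g θ t / Real.log t) atTop (nhds 0) := by
    have h2 := hlog.sub (mertens_real.const_mul θ)
    rw [mul_one, sub_self] at h2
    refine h2.congr fun t => ?_
    rw [hEq t, sub_div, mul_div_assoc]
  refine ⟨hE, ?_⟩
  intro C hC lam hlam
  have hJ : Tendsto (fun u : ℝ => ∫ t in Real.exp u..Real.exp (lam * u),
      mertensError g θ t / (t * Real.log t ^ 2)) atTop (nhds 0) := by
    rw [Metric.tendsto_atTop]
    intro ε hε
    obtain ⟨D, hD⟩ : ∃ D : ℝ, |lam - 1| / min 1 lam = D := ⟨_, rfl⟩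
    have hm : 0 < min 1 lam := lt_min one_pos hlam
    have hD0 : 0 ≤ D := by rw [← hD]; positivity
    obtain ⟨ε', hε'⟩ : ∃ e : ℝ, ε / (2 * (D + 1)) = e := ⟨_, rfl⟩
    have hε'0 : 0 < ε' := by rw [← hε']; positivity
    have hεD : ε' * D < ε := by
      rw [← hε', div_mul_eq_mul_div, div_lt_iff₀ (by positivity)]
      nlinarith
    obtain ⟨T, hT⟩ := (Metric.tendsto_atTop.mp hE) ε' hε'0
    have hT' : ∀ t : ℝ, max T 2 ≤ t → |mertensError g θ t / Real.log t| ≤ ε' := by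
      intro t ht
      have h := hT t (le_trans (le_max_left _ _) ht)
      rw [Real.dist_eq, sub_zero] at h
      exact h.le
    refine ⟨max (Real.log (max T 2)) 1 / min 1 lam, fun u hu => ?_⟩
    rw [ge_iff_le, div_le_iff₀ hm] at hu
    have hmu : max (Real.log (max T 2)) 1 ≤ min 1 lam * u := by linarith [hu]
    have hmu1 : 1 ≤ min 1 lam * u := le_trans (le_max_right _ _) hmu
    have hu0 : 0 < u := by nlinarith
    have hexpT : max T 2 ≤ Real.exp (min 1 lam * u) := by
      calc max T 2 = Real.exp (Real.log (max T 2)) := (Real.exp_log (by positivity)).symm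
        _ ≤ Real.exp (min 1 lam * u) :=
            Real.exp_le_exp.mpr (le_trans (le_max_left _ _) hmu)
    rw [Real.dist_eq, sub_zero]
    rcases le_total 1 lam with hl | hl
    · have hminl : min 1 lam = 1 := min_eq_left hl
      rw [hminl, one_mul] at hexpT hmu1
      have hxy : u ≤ lam * u := by nlinarith
      have hb := key_bound g θ hε'0 hT' hexpT hxy (by linarith)
      refine lt_of_le_of_lt hb ?_
      have heq2 : ε' / u * (lam * u - u) = ε' * (lam - 1) := by
        field_simp
      rw [heq2]
      have hDeq : D = lam - 1 := by
        rw [← hD, hminl, div_one, abs_of_nonneg (by linarith)]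
      rw [← hDeq]
      exact hεD
    · have hminl : min 1 lam = lam := min_eq_right hl
      rw [hminl] at hexpT hmu1
      have hlu0 : 0 < lam * u := by nlinarith
      have hxy : lam * u ≤ u := by nlinarith
      have hb := key_bound g θ hε'0 hT' hexpT hxy hlu0
      rw [intervalIntegral.integral_symm, abs_neg]
      refine lt_of_le_of_lt hb ?_
      have heq2 : ε' / (lam * u) * (u - lam * u) = ε' * ((1 - lam) / lam) := by
        field_simp
      rw [heq2]
      have hDeq : D = (1 - lam) / lam := by
        rw [← hD, hminl, abs_of_nonpos (by linarith)]
        ring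
      rw [← hDeq]
      exact hεD
  have hexp1 : Tendsto (fun u : ℝ => Real.exp (∫ t in Real.exp u..Real.exp (lam * u),
      mertensError g θ t / (t * Real.log t ^ 2))) atTop (nhds 1) := by
    have h := (Real.continuous_exp.tendsto 0).comp hJ
    simpa [Function.comp_def] using h
  refine Filter.Tendsto.congr' ?_ hexp1
  filter_upwards [eventually_ge_atTop (max (Real.log 2) (Real.log 2 / lam))] with u hu
  have h2u : (2:ℝ) ≤ Real.exp u := by
    rw [show (2:ℝ) = Real.exp (Real.log 2) from (Real.exp_log two_pos).symm]
    exact Real.exp_le_exp.mpr (le_trans (le_max_left _ _) hu)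
  have h2lu : (2:ℝ) ≤ Real.exp (lam * u) := by
    rw [show (2:ℝ) = Real.exp (Real.log 2) from (Real.exp_log two_pos).symm]
    refine Real.exp_le_exp.mpr ?_
    have h := le_trans (le_max_right _ _) hu
    rw [div_le_iff₀ hlam] at h
    nlinarith
  have i1 : IntervalIntegrable (fun t => mertensError g θ t / (t * Real.log t ^ 2))
      MeasureTheory.volume 2 (Real.exp u) := mertensError_integrable g θ le_rfl h2u
  have i2 : IntervalIntegrable (fun t => mertensError g θ t / (t * Real.log t ^ 2))
      MeasureTheory.volume (Real.exp u) (Real.exp (lam * u)) := by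
    rcases le_total (Real.exp u) (Real.exp (lam * u)) with h | h
    · exact mertensError_integrable g θ h2u h
    · exact (mertensError_integrable g θ h2lu h).symm
  have hadd := intervalIntegral.integral_add_adjacent_intervals i1 i2
  rw [mul_div_mul_left _ _ (ne_of_gt hC), ← Real.exp_sub]
  congr 1
  linarith [hadd]
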